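/- Every internal set is sharply closed: if (A_ε) is a net of subsets of ℝ^n (or ℂ), then the internal set [A_ε] := { [x_ε] ∈ ℝ̃_ρ^n : x_ε ∈ A_ε for ε small, for all representatives } is closed in the sharp topology of ℝ̃_ρ^n; moreover [A_ε] = [cl(A_ε)] where cl denotes topological closure in ℝ^n. -/

import Mathlib

open Filter Topology

namespace RC

def F : Filter ℝ := nhdsWithin 0 (Set.Ioi 0)

/-- A gauge: a net `ρ : (0,1] → (0,1]` with `ρ ε → 0` as `ε → 0⁺`. -/
def Gauge (ρ : ℝ → ℝ) : Prop :=
  (∀ ε ∈ Set.Ioc (0:ℝ) 1, ρ ε ∈ Set.Ioc (0:ℝ) 1) ∧ Tendsto ρ F (nhds 0)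

/-- ρ-moderate real nets: `x_ε = O(ρ_ε^{-N})` for some `N`. -/
def Mod (ρ x : ℝ → ℝ) : Prop :=
  ∃ N : ℕ, ∃ C : ℝ, ∀ᶠ ε in F, |x ε| ≤ C * (ρ ε)⁻¹ ^ N

/-- ρ-negligible real nets: `x_ε = O(ρ_ε^{N})` for all `N`. -/
def Ngl (ρ x : ℝ → ℝ) : Prop :=
  ∀ N : ℕ, ∃ C : ℝ, ∀ᶠ ε in F, |x ε| ≤ C * ρ ε ^ N

def Eqv (ρ x y : ℝ → ℝ) : Prop := Ngl ρ (x - y)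

/-- The order on generalized numbers, at the level of representatives. -/
def leG (ρ x y : ℝ → ℝ) : Prop :=
  ∀ x', Mod ρ x' → Eqv ρ x' x → ∃ y', Mod ρ y' ∧ Eqv ρ y' y ∧ ∀ᶠ ε in F, x' ε ≤ y' ε

/-- Invertibility in the quotient ring, at the level of representatives. -/
def InvG (ρ x : ℝ → ℝ) : Prop := ∃ y, Mod ρ y ∧ Eqv ρ (x * y) 1

def ltG (ρ x y : ℝ → ℝ) : Prop := leG ρ x y ∧ InvG ρ (y - x)

def posInv (ρ r : ℝ → ℝ) : Prop := ltG ρ 0 r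

def ModC (ρ : ℝ → ℝ) (x : ℝ → ℂ) : Prop :=
  ∃ N : ℕ, ∃ C : ℝ, ∀ᶠ ε in F, ‖x ε‖ ≤ C * (ρ ε)⁻¹ ^ N

def NglC (ρ : ℝ → ℝ) (x : ℝ → ℂ) : Prop :=
  ∀ N : ℕ, ∃ C : ℝ, ∀ᶠ ε in F, ‖x ε‖ ≤ C * ρ ε ^ N

def EqvC (ρ : ℝ → ℝ) (x y : ℝ → ℂ) : Prop := NglC ρ (x - y)

def InvC (ρ : ℝ → ℝ) (x : ℝ → ℂ) : Prop := ∃ y, ModC ρ y ∧ EqvC ρ (x * y) 1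

noncomputable def absC (x : ℝ → ℂ) : ℝ → ℝ := fun ε => ‖x ε‖

variable {n : ℕ}

def ModV (ρ : ℝ → ℝ) (x : ℝ → EuclideanSpace ℝ (Fin n)) : Prop :=
  ∃ N : ℕ, ∃ C : ℝ, ∀ᶠ ε in F, ‖x ε‖ ≤ C * (ρ ε)⁻¹ ^ N

def NglV (ρ : ℝ → ℝ) (x : ℝ → EuclideanSpace ℝ (Fin n)) : Prop :=
  ∀ N : ℕ, ∃ C : ℝ, ∀ᶠ ε in F, ‖x ε‖ ≤ C * ρ ε ^ N

def EqvV (ρ : ℝ → ℝ) (x y : ℝ → EuclideanSpace ℝ (Fin n)) : Prop := NglV ρ (x - y)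

/-- Membership in the internal set `[A_ε]`. -/
def memInt (ρ : ℝ → ℝ) (A : ℝ → Set (EuclideanSpace ℝ (Fin n)))
    (x : ℝ → EuclideanSpace ℝ (Fin n)) : Prop :=
  ∃ x', ModV ρ x' ∧ EqvV ρ x' x ∧ ∀ᶠ ε in F, x' ε ∈ A ε

/-- Membership in the strongly internal set `⟨A_ε⟩`. -/
def memStr (ρ : ℝ → ℝ) (A : ℝ → Set (EuclideanSpace ℝ (Fin n)))
    (x : ℝ → EuclideanSpace ℝ (Fin n)) : Prop :=
  ∀ x', ModV ρ x' → EqvV ρ x' x → ∀ᶠ ε in F, x' ε ∈ A ε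


section Aux

open Metric

lemma ev_Ioc : ∀ᶠ ε in F, ε ∈ Set.Ioc (0:ℝ) 1 := by
  have h1 : ∀ᶠ ε in F, ε ∈ Set.Ioi (0:ℝ) := eventually_mem_nhdsWithin
  have h2 : ∀ᶠ ε in F, ε < 1 :=
    Filter.Eventually.filter_mono nhdsWithin_le_nhds (eventually_lt_nhds (by norm_num))
  exact (h1.and h2).mono fun ε h => ⟨h.1, h.2.le⟩

lemma rho_mem {ρ : ℝ → ℝ} (hρ : Gauge ρ) : ∀ᶠ ε in F, 0 < ρ ε ∧ ρ ε ≤ 1 :=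
  ev_Ioc.mono fun ε h => ⟨(hρ.1 ε h).1, (hρ.1 ε h).2⟩

lemma rho_small {ρ : ℝ → ℝ} (hρ : Gauge ρ) {c : ℝ} (hc : 0 < c) :
    ∀ᶠ ε in F, ρ ε < c :=
  hρ.2.eventually (eventually_lt_nhds hc)

lemma F_neBot : F.NeBot := by
  have : (nhdsWithin (0:ℝ) (Set.Ioi 0)).NeBot := inferInstance
  exact this

/-- Eventually `⌈ε⁻¹⌉₊ ≥ N`. -/
lemma ev_ceil_ge (N : ℕ) : ∀ᶠ ε in F, N ≤ ⌈ε⁻¹⌉₊ := by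
  have h1 : ∀ᶠ ε in F, ε ∈ Set.Ioi (0:ℝ) := eventually_mem_nhdsWithin
  have h2 : ∀ᶠ ε in F, ε < ((N:ℝ)+1)⁻¹ :=
    Filter.Eventually.filter_mono nhdsWithin_le_nhds
      (eventually_lt_nhds (by positivity))
  refine (h1.and h2).mono fun ε h => ?_
  have hε : (0:ℝ) < ε := h.1
  have hN : (N:ℝ) ≤ ε⁻¹ := by
    have h3 : (N:ℝ)+1 < ε⁻¹ := by
      rw [← lt_inv_comm₀ hε (by positivity)]
      exact h.2
    linarith
  calc N = ⌈(N:ℝ)⌉₊ := (Nat.ceil_natCast N).symm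
    _ ≤ ⌈ε⁻¹⌉₊ := Nat.ceil_mono hN

lemma Mod.add_bound' {ρ : ℝ → ℝ} (hρ : Gauge ρ) {u w f : ℝ → ℝ}
    (hu : Mod ρ u) (hw : Mod ρ w) (h : ∀ᶠ ε in F, |f ε| ≤ |u ε| + |w ε|) :
    Mod ρ f := by
  obtain ⟨N1, C1, h1⟩ := hu
  obtain ⟨N2, C2, h2⟩ := hw
  refine ⟨N1 + N2, |C1| + |C2|, ?_⟩
  filter_upwards [h1, h2, h, rho_mem hρ] with ε e1 e2 e3 e4
  have hinv : (1:ℝ) ≤ (ρ ε)⁻¹ := (one_le_inv₀ e4.1).2 e4.2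
  have p1 : (ρ ε)⁻¹ ^ N1 ≤ (ρ ε)⁻¹ ^ (N1 + N2) :=
    pow_le_pow_right₀ hinv (Nat.le_add_right _ _)
  have p2 : (ρ ε)⁻¹ ^ N2 ≤ (ρ ε)⁻¹ ^ (N1 + N2) :=
    pow_le_pow_right₀ hinv (Nat.le_add_left _ _)
  have q0 : (0:ℝ) ≤ (ρ ε)⁻¹ ^ N1 := by positivity
  have q0' : (0:ℝ) ≤ (ρ ε)⁻¹ ^ N2 := by positivity
  have q1 : C1 * (ρ ε)⁻¹ ^ N1 ≤ |C1| * (ρ ε)⁻¹ ^ (N1 + N2) :=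
    (mul_le_mul_of_nonneg_right (le_abs_self C1) q0).trans
      (mul_le_mul_of_nonneg_left p1 (abs_nonneg C1))
  have q2 : C2 * (ρ ε)⁻¹ ^ N2 ≤ |C2| * (ρ ε)⁻¹ ^ (N1 + N2) :=
    (mul_le_mul_of_nonneg_right (le_abs_self C2) q0').trans
      (mul_le_mul_of_nonneg_left p2 (abs_nonneg C2))
  calc |f ε| ≤ |u ε| + |w ε| := e3
    _ ≤ C1 * (ρ ε)⁻¹ ^ N1 + C2 * (ρ ε)⁻¹ ^ N2 := add_le_add e1 e2
    _ ≤ |C1| * (ρ ε)⁻¹ ^ (N1 + N2) + |C2| * (ρ ε)⁻¹ ^ (N1 + N2) := add_le_add q1 q2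
    _ = (|C1| + |C2|) * (ρ ε)⁻¹ ^ (N1 + N2) := by ring

lemma Ngl.add_bound' {ρ : ℝ → ℝ} {u w f : ℝ → ℝ}
    (hu : Ngl ρ u) (hw : Ngl ρ w) (h : ∀ᶠ ε in F, |f ε| ≤ |u ε| + |w ε|) :
    Ngl ρ f := by
  intro N
  obtain ⟨C1, h1⟩ := hu N
  obtain ⟨C2, h2⟩ := hw N
  refine ⟨C1 + C2, ?_⟩
  filter_upwards [h1, h2, h] with ε e1 e2 e3
  calc |f ε| ≤ |u ε| + |w ε| := e3
    _ ≤ C1 * ρ ε ^ N + C2 * ρ ε ^ N := add_le_add e1 e2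
    _ = (C1 + C2) * ρ ε ^ N := by ring

lemma Ngl.zero (ρ : ℝ → ℝ) : Ngl ρ (fun _ => (0:ℝ)) :=
  fun N => ⟨0, Filter.Eventually.of_forall fun ε => by simp⟩

lemma Ngl.of_bound {ρ : ℝ → ℝ} {u f : ℝ → ℝ}
    (hu : Ngl ρ u) (h : ∀ᶠ ε in F, |f ε| ≤ |u ε|) : Ngl ρ f :=
  Ngl.add_bound' hu (Ngl.zero ρ) (h.mono fun ε he => by simpa using he)

open Classical in
/-- Generalized distance from `x ε` to `A ε`, with value 1 when `A ε = ∅`. -/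
noncomputable def DD {n : ℕ} (x : ℝ → EuclideanSpace ℝ (Fin n))
    (A : ℝ → Set (EuclideanSpace ℝ (Fin n))) : ℝ → ℝ :=
  fun ε => if (A ε).Nonempty then Metric.infDist (x ε) (A ε) else 1

lemma DD_nonneg {n : ℕ} (x : ℝ → EuclideanSpace ℝ (Fin n))
    (A : ℝ → Set (EuclideanSpace ℝ (Fin n))) (ε : ℝ) : 0 ≤ DD x A ε := by
  unfold DD
  split
  · exact Metric.infDist_nonneg
  · norm_num

open Classical in
/-- Approximate selection from `A ε` near `x ε`. -/
noncomputable def pick {n : ℕ} (ρ : ℝ → ℝ) (x : ℝ → EuclideanSpace ℝ (Fin n))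
    (A : ℝ → Set (EuclideanSpace ℝ (Fin n))) : ℝ → EuclideanSpace ℝ (Fin n) :=
  fun ε =>
    if h : ∃ z ∈ A ε, dist (x ε) z < Metric.infDist (x ε) (A ε) + ρ ε ^ ⌈ε⁻¹⌉₊
    then h.choose else x ε

lemma pick_spec {n : ℕ} {ρ : ℝ → ℝ} {x : ℝ → EuclideanSpace ℝ (Fin n)}
    {A : ℝ → Set (EuclideanSpace ℝ (Fin n))} {ε : ℝ}
    (hA : (A ε).Nonempty) (hρ : 0 < ρ ε) :
    pick ρ x A ε ∈ A ε ∧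
      dist (x ε) (pick ρ x A ε) < Metric.infDist (x ε) (A ε) + ρ ε ^ ⌈ε⁻¹⌉₊ := by
  have hex : ∃ z ∈ A ε, dist (x ε) z < Metric.infDist (x ε) (A ε) + ρ ε ^ ⌈ε⁻¹⌉₊ := by
    rw [← Metric.infDist_lt_iff hA]
    have : (0:ℝ) < ρ ε ^ ⌈ε⁻¹⌉₊ := by positivity
    linarith
  unfold pick
  rw [dif_pos hex]
  exact ⟨hex.choose_spec.1, hex.choose_spec.2⟩

/-- The key characterization: `x ∈ [A_ε]` iff the distance net is negligible. -/
lemma memInt_iff_DD_ngl {n : ℕ} {ρ : ℝ → ℝ} (hρ : Gauge ρ)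
    {x : ℝ → EuclideanSpace ℝ (Fin n)} (hx : ModV ρ x)
    (A : ℝ → Set (EuclideanSpace ℝ (Fin n))) :
    memInt ρ A x ↔ Ngl ρ (DD x A) := by
  constructor
  · rintro ⟨x', _, he, hA⟩
    intro N
    obtain ⟨C, hC⟩ := he N
    refine ⟨C, ?_⟩
    filter_upwards [hC, hA] with ε e1 e2
    have hne : (A ε).Nonempty := ⟨x' ε, e2⟩
    have : DD x A ε ≤ ‖x' ε - x ε‖ := by
      unfold DD
      rw [if_pos hne]
      calc Metric.infDist (x ε) (A ε) ≤ dist (x ε) (x' ε) := Metric.infDist_le_dist_of_mem e2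
        _ = ‖x' ε - x ε‖ := by rw [dist_eq_norm, norm_sub_rev]
    have h0 := DD_nonneg x A ε
    rw [abs_of_nonneg h0]
    exact this.trans (by simpa [Pi.sub_apply] using e1)
  · intro hD
    -- the approximating net
    set w := pick ρ x A with hw
    -- eventually `A ε` is nonempty
    obtain ⟨C0, hC0⟩ := hD 1
    have hne : ∀ᶠ ε in F, (A ε).Nonempty := by
      filter_upwards [hC0, rho_small hρ (show (0:ℝ) < (|C0|+1)⁻¹ by positivity),
        rho_mem hρ] with ε e1 e2 e3
      by_contra hne
      have : DD x A ε = 1 := by unfold DD; rw [if_neg hne]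
      rw [this] at e1
      have : C0 * ρ ε ^ 1 < 1 := by
        have h1 : C0 * ρ ε ≤ |C0| * ρ ε := mul_le_mul_of_nonneg_right (le_abs_self C0) e3.1.le
        have h2 : |C0| * ρ ε < 1 := by
          rcases eq_or_lt_of_le (abs_nonneg C0) with h | h
          · rw [← h]; norm_num
          · have := (mul_lt_mul_of_pos_left e2 h)
            have hlt : |C0| * (|C0|+1)⁻¹ < 1 := by
              rw [mul_inv_lt_iff₀ (by positivity)]
              linarith
            nlinarith
        calc C0 * ρ ε ^ 1 = C0 * ρ ε := by ring
          _ ≤ |C0| * ρ ε := h1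
          _ < 1 := h2
      rw [abs_one] at e1
      linarith
    have hgood : ∀ᶠ ε in F, w ε ∈ A ε ∧
        ‖w ε - x ε‖ ≤ DD x A ε + ρ ε ^ ⌈ε⁻¹⌉₊ := by
      filter_upwards [hne, rho_mem hρ] with ε e1 e2
      obtain ⟨hmem, hd⟩ := pick_spec (x := x) e1 e2.1
      refine ⟨hmem, ?_⟩
      have : DD x A ε = Metric.infDist (x ε) (A ε) := by unfold DD; rw [if_pos e1]
      rw [this, ← norm_sub_rev, ← dist_eq_norm]
      exact hd.le
    have heqv : EqvV ρ w x := by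
      intro N
      obtain ⟨C, hC⟩ := hD N
      refine ⟨C + 1, ?_⟩
      filter_upwards [hC, hgood, ev_ceil_ge N, rho_mem hρ] with ε e1 e2 e3 e4
      have hpow : ρ ε ^ ⌈ε⁻¹⌉₊ ≤ ρ ε ^ N := pow_le_pow_of_le_one e4.1.le e4.2 e3
      have hDle : DD x A ε ≤ C * ρ ε ^ N := by
        rw [abs_of_nonneg (DD_nonneg x A ε)] at e1; exact e1
      calc ‖(w - x) ε‖ = ‖w ε - x ε‖ := rfl
        _ ≤ DD x A ε + ρ ε ^ ⌈ε⁻¹⌉₊ := e2.2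
        _ ≤ C * ρ ε ^ N + 1 * ρ ε ^ N := add_le_add hDle (by linarith)
        _ = (C + 1) * ρ ε ^ N := by ring
    have hmod : ModV ρ w := by
      obtain ⟨Nx, Cx, hCx⟩ := hx
      obtain ⟨C', hC'⟩ := heqv 0
      refine ⟨Nx, Cx + |C'|, ?_⟩
      filter_upwards [hCx, hC', rho_mem hρ] with ε e1 e2 e3
      have hinv : (1:ℝ) ≤ (ρ ε)⁻¹ ^ Nx :=
        one_le_pow₀ ((one_le_inv₀ e3.1).2 e3.2)
      have e2' : ‖w ε - x ε‖ ≤ C' := by simpa using e2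
      have hC'abs : C' ≤ |C'| * (ρ ε)⁻¹ ^ Nx := by
        calc C' ≤ |C'| := le_abs_self C'
          _ = |C'| * 1 := by ring
          _ ≤ |C'| * (ρ ε)⁻¹ ^ Nx := mul_le_mul_of_nonneg_left hinv (abs_nonneg C')
      calc ‖w ε‖ = ‖x ε + (w ε - x ε)‖ := by rw [show x ε + (w ε - x ε) = w ε by abel]
        _ ≤ ‖x ε‖ + ‖w ε - x ε‖ := norm_add_le _ _
        _ ≤ Cx * (ρ ε)⁻¹ ^ Nx + C' := add_le_add e1 e2'
        _ ≤ Cx * (ρ ε)⁻¹ ^ Nx + |C'| * (ρ ε)⁻¹ ^ Nx := by linarith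
        _ = (Cx + |C'|) * (ρ ε)⁻¹ ^ Nx := by ring
    exact ⟨w, hmod, heqv, hgood.mono fun ε h => h.1⟩

end Aux

/-- Internal sets are sharply closed, and `[A_ε] = [cl(A_ε)]`. -/
theorem internal_sharply_closed (ρ : ℝ → ℝ) (hρ : Gauge ρ) (n : ℕ)
    (A : ℝ → Set (EuclideanSpace ℝ (Fin n))) :
    (∀ x, ModV ρ x → ¬ memInt ρ A x →
      ∃ r : ℝ → ℝ, Mod ρ r ∧ posInv ρ r ∧
        ∀ y, ModV ρ y → ltG ρ (fun ε => ‖x ε - y ε‖) r → ¬ memInt ρ A y) ∧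
    (∀ x, ModV ρ x → (memInt ρ A x ↔ memInt ρ (fun ε => closure (A ε)) x)) := by
  constructor
  · -- internal sets are sharply closed
    intro x hx hxnot
    rw [memInt_iff_DD_ngl hρ hx A] at hxnot
    -- extract a scale at which the distance is frequently large
    unfold Ngl at hxnot
    push_neg at hxnot
    obtain ⟨N, hN⟩ := hxnot
    have hfreq : ∃ᶠ ε in F, ρ ε ^ N < DD x A ε := by
      have := hN 1
      refine this.mono fun ε h => ?_
      rw [abs_of_nonneg (DD_nonneg x A ε), one_mul] at h
      exact h
    refine ⟨fun ε => ρ ε ^ N / 2, ?_, ⟨?_, ?_⟩, ?_⟩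
    · -- Mod
      refine ⟨0, 1, ?_⟩
      filter_upwards [rho_mem hρ] with ε e
      have h1 : ρ ε ^ N ≤ 1 := pow_le_one₀ e.1.le e.2
      have h0 : (0:ℝ) ≤ ρ ε ^ N := pow_nonneg e.1.le N
      rw [abs_of_nonneg (by linarith)]
      simp only [pow_zero, mul_one]
      linarith
    · -- leG 0 r
      intro x' hx' hx'0
      refine ⟨fun ε => ρ ε ^ N / 2, ⟨0, 1, ?_⟩, ?_, ?_⟩
      · filter_upwards [rho_mem hρ] with ε e
        have h1 : ρ ε ^ N ≤ 1 := pow_le_one₀ e.1.le e.2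
        have h0 : (0:ℝ) ≤ ρ ε ^ N := pow_nonneg e.1.le N
        rw [abs_of_nonneg (by linarith)]
        simp only [pow_zero, mul_one]
        linarith
      · exact fun M => ⟨0, Filter.Eventually.of_forall fun ε => by simp⟩
      · obtain ⟨C, hC⟩ := hx'0 (N + 1)
        filter_upwards [hC, rho_mem hρ,
          rho_small hρ (show (0:ℝ) < (2*(|C|+1))⁻¹ by positivity)] with ε e1 e2 e3
        have e1' : |x' ε| ≤ C * ρ ε ^ (N+1) := by simpa using e1
        have hpos : (0:ℝ) ≤ ρ ε ^ N := pow_nonneg e2.1.le N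
        have hCρ : C * ρ ε ≤ 1/2 := by
          have b1 : C * ρ ε ≤ |C| * ρ ε := mul_le_mul_of_nonneg_right (le_abs_self C) e2.1.le
          have b2 : |C| * ρ ε ≤ |C| * (2*(|C|+1))⁻¹ :=
            mul_le_mul_of_nonneg_left e3.le (abs_nonneg C)
          have b3 : |C| * (2*(|C|+1))⁻¹ ≤ 1/2 := by
            rw [mul_inv_le_iff₀ (by positivity)]
            nlinarith [abs_nonneg C]
          linarith
        calc x' ε ≤ |x' ε| := le_abs_self _
          _ ≤ C * ρ ε ^ (N+1) := e1'
          _ = (C * ρ ε) * ρ ε ^ N := by ring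
          _ ≤ (1/2) * ρ ε ^ N := mul_le_mul_of_nonneg_right hCρ hpos
          _ = ρ ε ^ N / 2 := by ring
    · -- InvG (r - 0)
      refine ⟨fun ε => 2 * ((ρ ε)⁻¹) ^ N, ⟨N, 2, ?_⟩, ?_⟩
      · filter_upwards [rho_mem hρ] with ε e
        have h0 : (0:ℝ) ≤ 2 * ((ρ ε)⁻¹) ^ N :=
          mul_nonneg (by norm_num) (pow_nonneg (inv_nonneg.2 e.1.le) N)
        rw [abs_of_nonneg h0]
      · intro M
        refine ⟨1, ?_⟩
        filter_upwards [rho_mem hρ] with ε e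
        have hne : ρ ε ≠ 0 := ne_of_gt e.1
        have hv : (ρ ε ^ N / 2 - 0) * (2 * ((ρ ε)⁻¹) ^ N) = 1 := by
          rw [sub_zero, inv_pow]
          field_simp
        simp only [Pi.sub_apply, Pi.mul_apply, Pi.one_apply, Pi.zero_apply]
        rw [hv]
        simp only [sub_self, abs_zero, one_mul]
        exact pow_nonneg e.1.le M
    · -- the ball avoids [A]
      intro y hy hlt hymem
      obtain ⟨y', hy'm, hy'e, hy'A⟩ := hymem
      -- u := ‖x - y‖ is moderate
      have hu : Mod ρ (fun ε => ‖x ε - y ε‖) := by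
        obtain ⟨N1, C1, h1⟩ := hx
        obtain ⟨N2, C2, h2⟩ := hy
        exact Mod.add_bound' hρ (u := fun ε => ‖x ε‖) (w := fun ε => ‖y ε‖)
          ⟨N1, C1, h1.mono fun ε h => by simpa using h⟩
          ⟨N2, C2, h2.mono fun ε h => by simpa using h⟩
          (Filter.Eventually.of_forall fun ε => by
            simp only [abs_norm]
            exact norm_sub_le _ _)
      obtain ⟨v, hv, hvr, huv⟩ := hlt.1 (fun ε => ‖x ε - y ε‖) hu
        (fun M => ⟨0, Filter.Eventually.of_forall fun ε => by simp⟩)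
      -- negligible bounds
      obtain ⟨C1, hC1⟩ := hvr (N + 1)
      obtain ⟨C2, hC2⟩ := hy'e (N + 1)
      have hcontr : ∀ᶠ ε in F, ¬ (ρ ε ^ N < DD x A ε) := by
        filter_upwards [hC1, hC2, huv, hy'A, rho_mem hρ,
          rho_small hρ (show (0:ℝ) < (2*(|C1|+|C2|+1))⁻¹ by positivity)]
          with ε e1 e2 e3 e4 e5 e6
        intro hbig
        have hne : (A ε).Nonempty := ⟨y' ε, e4⟩
        have hDD : DD x A ε ≤ dist (x ε) (y' ε) := by
          unfold DD
          rw [if_pos hne]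
          exact Metric.infDist_le_dist_of_mem e4
        have step : dist (x ε) (y' ε) ≤ ‖x ε - y ε‖ + ‖y' ε - y ε‖ := by
          calc dist (x ε) (y' ε) = ‖x ε - y' ε‖ := dist_eq_norm _ _
            _ = ‖(x ε - y ε) - (y' ε - y ε)‖ := by
                rw [show x ε - y ε - (y' ε - y ε) = x ε - y' ε by abel]
            _ ≤ ‖x ε - y ε‖ + ‖y' ε - y ε‖ := norm_sub_le _ _
        have hyy' : ‖y' ε - y ε‖ ≤ C2 * ρ ε ^ (N+1) := by simpa using e2
        have hvb : v ε ≤ ρ ε ^ N / 2 + C1 * ρ ε ^ (N+1) := by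
          have : |v ε - ρ ε ^ N / 2| ≤ C1 * ρ ε ^ (N+1) := by simpa using e1
          have := (abs_le.mp this).2
          linarith
        have hpos : (0:ℝ) ≤ ρ ε ^ N := pow_nonneg e5.1.le N
        have hsum : (C1 + C2) * ρ ε < 1/2 := by
          have b1 : (C1 + C2) * ρ ε ≤ (|C1| + |C2|) * ρ ε := by
            have := abs_add_le C1 C2
            nlinarith [le_abs_self (C1 + C2), e5.1.le, abs_nonneg (C1+C2)]
          have b2 : (|C1| + |C2|) * ρ ε < (|C1| + |C2| + 1) * (2*(|C1|+|C2|+1))⁻¹ := by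
            have hq : (0:ℝ) < |C1| + |C2| + 1 := by positivity
            calc (|C1| + |C2|) * ρ ε ≤ (|C1| + |C2| + 1) * ρ ε := by nlinarith
              _ < (|C1| + |C2| + 1) * (2*(|C1|+|C2|+1))⁻¹ :=
                mul_lt_mul_of_pos_left e6 hq
          have b3 : (|C1| + |C2| + 1) * (2*(|C1|+|C2|+1))⁻¹ = 1/2 := by
            field_simp
          linarith
        have : ρ ε ^ N < ρ ε ^ N / 2 + (C1 + C2) * ρ ε ^ (N+1) := by
          have chain : DD x A ε ≤ ρ ε ^ N / 2 + (C1 + C2) * ρ ε ^ (N+1) := by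
            calc DD x A ε ≤ dist (x ε) (y' ε) := hDD
              _ ≤ ‖x ε - y ε‖ + ‖y' ε - y ε‖ := step
              _ ≤ v ε + C2 * ρ ε ^ (N+1) := add_le_add e3 hyy'
              _ ≤ ρ ε ^ N / 2 + C1 * ρ ε ^ (N+1) + C2 * ρ ε ^ (N+1) := by linarith
              _ = ρ ε ^ N / 2 + (C1 + C2) * ρ ε ^ (N+1) := by ring
          linarith
        have : ρ ε ^ N / 2 < (C1 + C2) * ρ ε * ρ ε ^ N := by
          have hh : (C1 + C2) * ρ ε ^ (N+1) = (C1 + C2) * ρ ε * ρ ε ^ N := by ring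
          linarith [hh ▸ this]
        nlinarith [mul_le_mul_of_nonneg_right hsum.le hpos]
      have := F_neBot
      exact (hfreq.and_eventually hcontr).exists.elim fun ε h => h.2 h.1
  · -- [A] = [cl A]
    intro x hx
    constructor
    · rintro ⟨x', hm, he, hA⟩
      exact ⟨x', hm, he, hA.mono fun ε h => subset_closure h⟩
    · rintro ⟨x', hm', he', hcl⟩
      rw [memInt_iff_DD_ngl hρ hx A]
      have hbound : ∀ᶠ ε in F, |DD x A ε| ≤ |‖(x' - x) ε‖| := by
        filter_upwards [hcl] with ε h
        have hne : (A ε).Nonempty := by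
          have : (closure (A ε)).Nonempty := ⟨x' ε, h⟩
          exact Set.Nonempty.of_closure this
        have h0 : Metric.infDist (x' ε) (A ε) = 0 := by
          rw [← Metric.infDist_closure]
          exact Metric.infDist_zero_of_mem h
        have : DD x A ε ≤ dist (x ε) (x' ε) := by
          unfold DD
          rw [if_pos hne]
          calc Metric.infDist (x ε) (A ε)
              ≤ Metric.infDist (x' ε) (A ε) + dist (x ε) (x' ε) :=
                Metric.infDist_le_infDist_add_dist
            _ = dist (x ε) (x' ε) := by rw [h0]; ring
        rw [abs_of_nonneg (DD_nonneg x A ε), abs_norm]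
        calc DD x A ε ≤ dist (x ε) (x' ε) := this
          _ = ‖x' ε - x ε‖ := by rw [dist_eq_norm, norm_sub_rev]
          _ = ‖(x' - x) ε‖ := rfl
      exact Ngl.of_bound (fun M => (he' M).imp fun C hC =>
        hC.mono fun ε h => by simpa using h) hbound


end RC
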